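/- Let x be a positive irrational real number with x > 1, let p be a prime with p < x, assume x < N_p, and let k be an integer with 1 ≤ k ≤ p−1. Then |S_x(kN_p − x, kN_p)| − |S_x(0, x)| = Σ_{j=0}^{π(x)} (−1)^j Σ_{a ∈ A_j} [ R(0, x/a) − R((kN_p − x)/a, kN_p/a) ]. -/

import Mathlib

open scoped Classical
open Finset

noncomputable section

/-- Sum of the Möbius function over positive integers `a` in the open interval `(u, v)`
that are *not* divisible by `p`. -/
def Mp' (p : ℕ) (u v : ℝ) : ℤ :=
  ∑ a ∈ (Finset.Icc 1 ⌈v⌉₊).filter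
      (fun a : ℕ => u < (a : ℝ) ∧ (a : ℝ) < v ∧ ¬ p ∣ a),
    ArithmeticFunction.moebius a

/-- Sum of the Möbius function over positive integers `a` in the open interval `(u, v)`
that *are* divisible by `p`. -/
def Mp (p : ℕ) (u v : ℝ) : ℤ :=
  ∑ a ∈ (Finset.Icc 1 ⌈v⌉₊).filter
      (fun a : ℕ => u < (a : ℝ) ∧ (a : ℝ) < v ∧ p ∣ a),
    ArithmeticFunction.moebius a

/-- `Sx y u v` : the set of positive integers in the open interval `(u, v)` all of whose
prime divisors exceed `y`. -/
def Sx (y u v : ℝ) : Set ℕ :=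
  {a : ℕ | 0 < a ∧ u < (a : ℝ) ∧ (a : ℝ) < v ∧ ∀ q : ℕ, q.Prime → q ∣ a → y < (q : ℝ)}

/-- `Np x p` : the product of all primes `q < x` with `q ≠ p`. -/
def Np (x : ℝ) (p : ℕ) : ℕ :=
  ∏ q ∈ (Finset.range ⌈x⌉₊).filter (fun q : ℕ => q.Prime ∧ (q : ℝ) < x ∧ q ≠ p), q

/-- `Aset x j` : squarefree positive integers with exactly `j` prime factors,
all of them less than `x`. -/
def Aset (x : ℝ) (j : ℕ) : Finset ℕ :=
  (Finset.Icc 1 (⌈x⌉₊ ^ j)).filter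
    (fun a => Squarefree a ∧ a.primeFactors.card = j ∧ ∀ q ∈ a.primeFactors, (q : ℝ) < x)

/-- `Nint a b` : the number of integers in the open interval `(a, b)`. -/
def Nint (a b : ℝ) : ℕ :=
  (Finset.Ioo ⌊a⌋ ⌈b⌉).card

/-- `Rres a b = (b - a) - N(a, b)`. -/
def Rres (a b : ℝ) : ℝ :=
  (b - a) - Nint a b

/-- `piR t` : the number of primes `≤ t`. -/
def piR (t : ℝ) : ℕ :=
  Nat.primeCounting ⌊t⌋₊

def Qx (x : ℝ) : Finset ℕ := (Finset.range (⌊x⌋₊ + 1)).filter Nat.Prime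

def Px (x : ℝ) : ℕ := ∏ q ∈ Qx x, q

lemma moebius_sum_divisors (n : ℕ) :
    ∑ d ∈ n.divisors, ArithmeticFunction.moebius d = if n = 1 then 1 else 0 := by
  have h := ArithmeticFunction.coe_mul_zeta_apply (f := ArithmeticFunction.moebius) (x := n)
  rw [ArithmeticFunction.moebius_mul_coe_zeta] at h
  simpa [ArithmeticFunction.one_apply] using h.symm

lemma mem_Qx {x : ℝ} (hx : 0 ≤ x) (hxirr : Irrational x) {q : ℕ} :
    q ∈ Qx x ↔ q.Prime ∧ (q : ℝ) < x := by
  simp only [Qx, mem_filter, mem_range, Nat.lt_succ_iff]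
  constructor
  · rintro ⟨hq, hp⟩
    refine ⟨hp, lt_of_le_of_ne ((Nat.cast_le.mpr hq).trans (Nat.floor_le hx)) ?_⟩
    intro h
    exact hxirr ⟨q, by push_cast; exact h⟩
  · rintro ⟨hp, hlt⟩
    exact ⟨Nat.le_floor hlt.le, hp⟩

lemma card_Qx (x : ℝ) : (Qx x).card = piR x := by
  rw [piR, Nat.primeCounting, ← Nat.primesBelow_card_eq_primeCounting']
  rfl

lemma Px_ne_zero (x : ℝ) : Px x ≠ 0 :=
  Finset.prod_ne_zero_iff.mpr fun q hq => ((Finset.mem_filter.mp hq).2.pos).ne'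

lemma squarefree_prod_primes {s : Finset ℕ} (hs : ∀ p ∈ s, p.Prime) :
    Squarefree (∏ p ∈ s, p) := by
  induction s using Finset.induction with
  | empty => simpa using squarefree_one
  | insert a s' hns ih =>
    rw [Finset.prod_insert hns]
    have hp := hs a (mem_insert_self _ _)
    have hrest : ∀ p ∈ s', p.Prime := fun p hp' => hs p (mem_insert_of_mem hp')
    have hcop : a.Coprime (∏ p ∈ s', p) := by
      rw [hp.coprime_iff_not_dvd]
      intro hdvd
      obtain ⟨b, hb, hab⟩ := (Prime.dvd_finset_prod_iff hp.prime _).mp hdvd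
      exact hns (((Nat.prime_dvd_prime_iff_eq hp (hrest b hb)).mp hab) ▸ hb)
    exact (Nat.squarefree_mul hcop).mpr ⟨hp.squarefree, ih hrest⟩

lemma squarefree_Px (x : ℝ) : Squarefree (Px x) :=
  squarefree_prod_primes fun q hq => (Finset.mem_filter.mp hq).2

lemma primeFactors_Px (x : ℝ) : (Px x).primeFactors = Qx x :=
  Nat.primeFactors_prod fun q hq => (Finset.mem_filter.mp hq).2


lemma divisors_Px {x : ℝ} (hx : 0 ≤ x) (hxirr : Irrational x) :
    (Px x).divisors = (Finset.range (piR x + 1)).biUnion (Aset x) := by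
  ext d
  simp only [Nat.mem_divisors, mem_biUnion, mem_range, Nat.lt_succ_iff]
  constructor
  · rintro ⟨hdvd, -⟩
    have hsq : Squarefree d := (squarefree_Px x).squarefree_of_dvd hdvd
    have hsub : d.primeFactors ⊆ Qx x :=
      (primeFactors_Px x) ▸ Nat.primeFactors_mono hdvd (Px_ne_zero x)
    refine ⟨d.primeFactors.card, ?_, ?_⟩
    · rw [← card_Qx x]; exact Finset.card_le_card hsub
    · refine mem_filter.mpr ⟨mem_Icc.mpr ⟨Nat.one_le_iff_ne_zero.mpr hsq.ne_zero, ?_⟩, hsq, rfl,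
        fun q hq => ((mem_Qx hx hxirr).1 (hsub hq)).2⟩
      calc d = ∏ q ∈ d.primeFactors, q := (Nat.prod_primeFactors_of_squarefree hsq).symm
        _ ≤ ⌈x⌉₊ ^ d.primeFactors.card := by
            refine Finset.prod_le_pow_card _ _ _ fun q hq => ?_
            have hqx : (q : ℝ) < x := ((mem_Qx hx hxirr).1 (hsub hq)).2
            have := hqx.trans_le (Nat.le_ceil x)
            exact_mod_cast this.le
  · rintro ⟨j, hj, hd⟩
    simp only [Aset, mem_filter, mem_Icc] at hd
    obtain ⟨⟨hd1, -⟩, hsq, hcard, hlt⟩ := hd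
    refine ⟨?_, Px_ne_zero x⟩
    rw [← Nat.prod_primeFactors_of_squarefree hsq]
    exact Finset.prod_dvd_prod_of_subset _ _ _
      (fun q hq => (mem_Qx hx hxirr).2 ⟨Nat.prime_of_mem_primeFactors hq, hlt q hq⟩)

lemma coprime_Px_iff {x : ℝ} (hx : 0 ≤ x) (hxirr : Irrational x) {n : ℕ} :
    n.Coprime (Px x) ↔ ∀ q : ℕ, q.Prime → q ∣ n → x < (q : ℝ) := by
  constructor
  · intro h q hq hqn
    by_contra hle
    push_neg at hle
    have hlt : (q : ℝ) < x :=
      lt_of_le_of_ne hle (fun h' => hxirr ⟨q, by push_cast; exact h'⟩)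
    have hqP : q ∣ Px x := Finset.dvd_prod_of_mem _ ((mem_Qx hx hxirr).2 ⟨hq, hlt⟩)
    have h1 : q ∣ 1 := h ▸ Nat.dvd_gcd hqn hqP
    exact hq.one_lt.ne' (Nat.dvd_one.mp h1)
  · intro h
    by_contra hne
    obtain ⟨q, hq, hqd⟩ := Nat.exists_prime_and_dvd hne
    have hqn := hqd.trans (Nat.gcd_dvd_left _ _)
    have hqP := hqd.trans (Nat.gcd_dvd_right _ _)
    have h1 := h q hq hqn
    have hmem : q ∈ Qx x := by
      rw [← primeFactors_Px x]
      exact Nat.mem_primeFactors.mpr ⟨hq, hqP, Px_ne_zero x⟩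
    exact absurd ((mem_Qx hx hxirr).1 hmem).2 (not_lt.mpr h1.le)


lemma card_dvd_filter (u v : ℝ) (hu : 0 ≤ u) {d : ℕ} (hd : 0 < d) :
    (((Finset.Icc 1 ⌈v⌉₊).filter (fun n : ℕ => u < (n : ℝ) ∧ (n : ℝ) < v)).filter
      (fun n : ℕ => d ∣ n)).card = Nint (u / d) (v / d) := by
  have hd0 : (0 : ℝ) < d := by exact_mod_cast hd
  rw [Nint]
  refine Finset.card_bij' (i := fun n _ => ((n / d : ℕ) : ℤ))
    (j := fun m _ => d * m.toNat) ?_ ?_ ?_ ?_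
  · intro n hn
    simp only [mem_filter, mem_Icc] at hn
    obtain ⟨⟨-, ⟨hun, hnv⟩⟩, hdn⟩ := hn
    obtain ⟨c, rfl⟩ := hdn
    rw [Nat.mul_div_cancel_left c hd]
    have hcr : ((d * c : ℕ) : ℝ) = (d : ℝ) * c := by push_cast; ring
    refine Finset.mem_Ioo.mpr ⟨Int.floor_lt.mpr ?_, Int.lt_ceil.mpr ?_⟩
    · rw [div_lt_iff₀ hd0]
      push_cast
      calc u < (d : ℝ) * c := by rw [← hcr]; exact hun
        _ = (c : ℝ) * d := by ring
    · rw [lt_div_iff₀ hd0]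
      push_cast
      calc (c : ℝ) * d = (d : ℝ) * c := by ring
        _ < v := by rw [← hcr]; exact hnv
  · intro m hm
    simp only [Finset.mem_Ioo] at hm
    obtain ⟨h1, h2⟩ := hm
    have hm0 : 0 < m := by
      have : (0 : ℤ) ≤ ⌊u / d⌋ := Int.floor_nonneg.mpr (div_nonneg hu hd0.le)
      omega
    have hmt : ((m.toNat : ℕ) : ℝ) = (m : ℝ) := by
      exact_mod_cast Int.toNat_of_nonneg hm0.le
    have hum : u < (d : ℝ) * m := by
      have := Int.floor_lt.mp h1
      rwa [div_lt_iff₀ hd0, mul_comm] at this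
    have hmv : (d : ℝ) * m < v := by
      have := Int.lt_ceil.mp h2
      rwa [lt_div_iff₀ hd0, mul_comm] at this
    simp only [mem_filter, mem_Icc]
    have hcast : ((d * m.toNat : ℕ) : ℝ) = (d : ℝ) * m := by push_cast [hmt]; ring
    refine ⟨⟨⟨?_, ?_⟩, ?_, ?_⟩, Dvd.intro _ rfl⟩
    · have : 1 ≤ m.toNat := by omega
      exact Nat.one_le_iff_ne_zero.mpr (by positivity)
    · have : ((d * m.toNat : ℕ) : ℝ) < v := by rw [hcast]; exact hmv
      have h3 : (d * m.toNat : ℕ) < ⌈v⌉₊ := Nat.lt_ceil.mpr this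
      omega
    · rw [hcast]; exact hum
    · rw [hcast]; exact hmv
  · intro n hn
    simp only [mem_filter, mem_Icc] at hn
    obtain ⟨-, hdn⟩ := hn
    simp only [Int.toNat_natCast]
    exact Nat.mul_div_cancel' hdn
  · intro m hm
    simp only [Finset.mem_Ioo] at hm
    have hm0 : 0 ≤ m := by
      have : (0 : ℤ) ≤ ⌊u / d⌋ := Int.floor_nonneg.mpr (div_nonneg hu hd0.le)
      omega
    rw [Nat.mul_div_cancel_left _ hd, Int.toNat_of_nonneg hm0]


lemma Aset_disjoint (x : ℝ) : ∀ i ∈ Finset.range (piR x + 1), ∀ j ∈ Finset.range (piR x + 1),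
    i ≠ j → Disjoint (Aset x i) (Aset x j) := by
  intro i _ j _ hij
  rw [Finset.disjoint_left]
  intro a hai haj
  simp only [Aset, mem_filter] at hai haj
  exact hij (hai.2.2.1 ▸ haj.2.2.1)

lemma sieve {x : ℝ} (hx : 0 ≤ x) (hxirr : Irrational x) (u v : ℝ) (hu : 0 ≤ u) :
    ((Sx x u v).ncard : ℤ)
      = ∑ j ∈ Finset.range (piR x + 1), ∑ a ∈ Aset x j,
          ArithmeticFunction.moebius a * (Nint (u / a) (v / a) : ℤ) := by
  set T : Finset ℕ :=
    (Finset.Icc 1 ⌈v⌉₊).filter (fun n : ℕ => u < (n : ℝ) ∧ (n : ℝ) < v) with hT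
  have hset : Sx x u v = ↑(T.filter fun n => n.Coprime (Px x)) := by
    ext n
    simp only [Sx, Set.mem_setOf_eq, Finset.coe_filter, hT, mem_filter, mem_Icc]
    constructor
    · rintro ⟨hn0, hun, hnv, hq⟩
      exact ⟨⟨⟨hn0, (Nat.lt_ceil.mpr hnv).le⟩, hun, hnv⟩, (coprime_Px_iff hx hxirr).2 hq⟩
    · rintro ⟨⟨⟨hn1, -⟩, hun, hnv⟩, hcop⟩
      exact ⟨hn1, hun, hnv, (coprime_Px_iff hx hxirr).1 hcop⟩
  rw [hset, Set.ncard_coe_finset]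
  have hgcd : ∀ n : ℕ, (Nat.gcd n (Px x)).divisors = (Px x).divisors.filter (· ∣ n) := by
    intro n
    ext d
    simp only [Nat.mem_divisors, mem_filter]
    constructor
    · rintro ⟨hd, -⟩
      exact ⟨⟨hd.trans (Nat.gcd_dvd_right _ _), Px_ne_zero x⟩, hd.trans (Nat.gcd_dvd_left _ _)⟩
    · rintro ⟨⟨hdP, -⟩, hdn⟩
      exact ⟨Nat.dvd_gcd hdn hdP, Nat.gcd_ne_zero_right (Px_ne_zero x)⟩
  calc ((T.filter fun n => n.Coprime (Px x)).card : ℤ)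
      = ∑ n ∈ T, if n.Coprime (Px x) then (1 : ℤ) else 0 := by
        rw [Finset.card_filter, Nat.cast_sum]
        exact Finset.sum_congr rfl fun n _ => by split <;> simp
    _ = ∑ n ∈ T, ∑ d ∈ (Px x).divisors, if d ∣ n then ArithmeticFunction.moebius d else 0 := by
        refine Finset.sum_congr rfl fun n _ => ?_
        rw [← Finset.sum_filter, ← hgcd n, moebius_sum_divisors]
    _ = ∑ d ∈ (Px x).divisors, ∑ n ∈ T, if d ∣ n then ArithmeticFunction.moebius d else 0 :=
        Finset.sum_comm
    _ = ∑ d ∈ (Px x).divisors,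
          ArithmeticFunction.moebius d * ((T.filter fun n : ℕ => d ∣ n).card : ℤ) := by
        refine Finset.sum_congr rfl fun d _ => ?_
        rw [← Finset.sum_filter, Finset.sum_const, nsmul_eq_mul, mul_comm]
    _ = ∑ d ∈ (Px x).divisors,
          ArithmeticFunction.moebius d * (Nint (u / d) (v / d) : ℤ) := by
        refine Finset.sum_congr rfl fun d hd => ?_
        rw [hT, Finset.filter_filter]
        rw [show (((Finset.Icc 1 ⌈v⌉₊).filter
            (fun n : ℕ => (u < (n : ℝ) ∧ (n : ℝ) < v) ∧ d ∣ n)).card : ℤ)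
          = ((((Finset.Icc 1 ⌈v⌉₊).filter (fun n : ℕ => u < (n : ℝ) ∧ (n : ℝ) < v)).filter
            (fun n : ℕ => d ∣ n)).card : ℤ) by rw [Finset.filter_filter]]
        rw [card_dvd_filter u v hu (Nat.pos_of_mem_divisors hd)]
    _ = ∑ j ∈ Finset.range (piR x + 1), ∑ a ∈ Aset x j,
          ArithmeticFunction.moebius a * (Nint (u / a) (v / a) : ℤ) := by
        rw [divisors_Px hx hxirr, Finset.sum_biUnion]
        intro i hi j hj hij
        exact Aset_disjoint x i hi j hj hij

lemma moebius_eq_pow {a : ℕ} (h : Squarefree a) :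
    ArithmeticFunction.moebius a = (-1) ^ a.primeFactors.card := by
  rw [ArithmeticFunction.moebius_apply_of_squarefree h]
  congr 1
  rw [ArithmeticFunction.cardFactors_apply]
  simp only [Nat.primeFactors, List.card_toFinset,
    ((Nat.squarefree_iff_nodup_primeFactorsList h.ne_zero).mp h).dedup]

theorem stmt_9 (x : ℝ) (hx : 1 < x) (hxirr : Irrational x)
    (p : ℕ) (hp : p.Prime) (hpx : (p : ℝ) < x) (hxN : x < Np x p)
    (k : ℕ) (hk1 : 1 ≤ k) (hk2 : k ≤ p - 1) :
    ((Sx x ((k : ℝ) * Np x p - x) ((k : ℝ) * Np x p)).ncard : ℝ)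
        - ((Sx x 0 x).ncard : ℝ)
      = ∑ j ∈ Finset.range (piR x + 1),
          (-1 : ℝ) ^ j * ∑ a ∈ Aset x j,
            (Rres 0 (x / a)
              - Rres (((k : ℝ) * Np x p - x) / a) (((k : ℝ) * Np x p) / a)) := by
  have hx0 : (0 : ℝ) ≤ x := by linarith
  set u : ℝ := (k : ℝ) * Np x p - x with hu_def
  set v : ℝ := (k : ℝ) * Np x p with hv_def
  have hN0 : (0 : ℝ) < Np x p := lt_trans (by linarith) hxN
  have hk1' : (1 : ℝ) ≤ (k : ℝ) := by exact_mod_cast hk1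
  have hvN : (Np x p : ℝ) ≤ v := le_mul_of_one_le_left hN0.le hk1'
  have hu0 : 0 ≤ u := by rw [hu_def]; rw [hv_def] at hvN; linarith
  have h1 := sieve hx0 hxirr u v hu0
  have h2 := sieve hx0 hxirr 0 x (le_refl 0)
  simp only [zero_div] at h2
  have h3 : ((Sx x u v).ncard : ℤ) - ((Sx x 0 x).ncard : ℤ)
      = ∑ j ∈ Finset.range (piR x + 1), ∑ a ∈ Aset x j,
          ArithmeticFunction.moebius a
            * ((Nint (u / a) (v / a) : ℤ) - (Nint 0 (x / a) : ℤ)) := by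
    rw [h1, h2, ← Finset.sum_sub_distrib]
    refine Finset.sum_congr rfl fun j _ => ?_
    rw [← Finset.sum_sub_distrib]
    exact Finset.sum_congr rfl fun a _ => (mul_sub _ _ _).symm
  have key : ((Sx x u v).ncard : ℝ) - ((Sx x 0 x).ncard : ℝ)
      = ∑ j ∈ Finset.range (piR x + 1), ∑ a ∈ Aset x j,
          (ArithmeticFunction.moebius a : ℝ)
            * ((Nint (u / a) (v / a) : ℝ) - (Nint 0 (x / a) : ℝ)) := by
    have := congrArg (fun z : ℤ => (z : ℝ)) h3
    push_cast at this
    exact this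
  rw [key]
  refine Finset.sum_congr rfl fun j hj => ?_
  rw [Finset.mul_sum]
  refine Finset.sum_congr rfl fun a ha => ?_
  simp only [Aset, mem_filter, mem_Icc] at ha
  obtain ⟨⟨ha1, -⟩, hsq, hcard, -⟩ := ha
  have ha0 : (0 : ℝ) < a := by exact_mod_cast ha1
  have hmu : (ArithmeticFunction.moebius a : ℝ) = (-1 : ℝ) ^ j := by
    rw [moebius_eq_pow hsq, hcard]; push_cast; ring
  have hxdiv : v / a - u / a = x / a := by
    rw [div_sub_div_same, hu_def]; congr 1; ring
  have hRres : Rres 0 (x / a) - Rres (u / a) (v / a)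
      = (Nint (u / a) (v / a) : ℝ) - (Nint 0 (x / a) : ℝ) := by
    rw [Rres, Rres]
    have : v / a - u / a = x / a := hxdiv
    linarith [this]
  rw [hmu, hRres]

end
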